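/- Every uniform mass problem has meet-irreducible Medvedev degree: if A is a uniform mass problem and B, C are mass problems with deg_s(A) ≥ deg_s(B) ∧ deg_s(C), then deg_s(A) ≥ deg_s(B) or deg_s(A) ≥ deg_s(C). -/

import Mathlib

/-!  Common definitions: mass problems in Baire space, Medvedev reducibility,
enumeration reducibility, trees, and related notions. -/

/-- A Turing functional, given by a monotone partial recursive map taking a
finite initial segment of the oracle and an input to an output value. -/
structure TuringFunctional where
  app : List ℕ × ℕ →. ℕ
  partrec : Partrec app
  mono : ∀ {σ τ : List ℕ} {n y : ℕ}, σ <+: τ → y ∈ app (σ, n) → y ∈ app (τ, n)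

/-- `Φ.Total g f` means that `Φ(g)` is total and equals `f`. -/
def TuringFunctional.Total (Φ : TuringFunctional) (g f : ℕ → ℕ) : Prop :=
  ∀ n, ∃ k, f n ∈ Φ.app ((List.range k).map g, n)

/-- Medvedev reducibility `A ≤ₛ B` between mass problems. -/
def MedvedevLE (A B : Set (ℕ → ℕ)) : Prop :=
  ∃ Φ : TuringFunctional, ∀ g ∈ B, ∃ f, Φ.Total g f ∧ f ∈ A

/-- Medvedev equivalence. -/
def MedvedevEquiv (A B : Set (ℕ → ℕ)) : Prop := MedvedevLE A B ∧ MedvedevLE B A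

/-- The problem of enumerability of `A`: all functions with range `A`. -/
def EProb (A : Set ℕ) : Set (ℕ → ℕ) := {f | Set.range f = A}

/-- The graph of `f`, coded as a set of naturals via the pairing function. -/
def graphSet (f : ℕ → ℕ) : Set ℕ := Set.range fun n => Nat.pair n (f n)

/-- The `e`-th enumeration operator applied to a set `B`:
`x` is enumerated iff for some (code `u` of a) finite list contained in `B`,
the `e`-th partial recursive function halts on `⟨x, u⟩`. -/
def enumOpApply (e : ℕ) (B : Set ℕ) : Set ℕ :=
  {x | ∃ u : ℕ, ((Denumerable.ofNat Nat.Partrec.Code e).eval (Nat.pair x u)).Dom ∧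
        ∀ y ∈ Denumerable.ofNat (List ℕ) u, y ∈ B}

/-- Enumeration reducibility between subsets of `ℕ`. -/
def EnumLE (A B : Set ℕ) : Prop := ∃ e : ℕ, enumOpApply e B = A

/-- Enumeration equivalence. -/
def EnumEquiv (A B : Set ℕ) : Prop := EnumLE A B ∧ EnumLE B A

/-- `A` is recursively enumerable: it is the domain of a partial recursive function. -/
def REset (A : Set ℕ) : Prop := ∃ c : Nat.Partrec.Code, A = {x | (c.eval x).Dom}

/-- `A` is quasiminimal: not r.e., and every total function whose graph
enumeration-reduces to `A` is recursive. -/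
def Quasiminimal (A : Set ℕ) : Prop :=
  ¬ REset A ∧ ∀ f : ℕ → ℕ, EnumLE (graphSet f) A → Computable f

/-- `A` (as a set) has cototal enumeration degree. -/
def CototalDeg (A : Set ℕ) : Prop := ∃ B : Set ℕ, EnumEquiv B A ∧ EnumLE B Bᶜ

/-- The set `K_A = {⟨e,x⟩ : x ∈ Ψ_e(A)}`. -/
def Kset (A : Set ℕ) : Set ℕ := {p | p.unpair.2 ∈ enumOpApply p.unpair.1 A}

/-- The skip of `A`. -/
def skipSet (A : Set ℕ) : Set ℕ := (Kset A)ᶜ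

/-- The recursive join of two subsets of `ℕ`. -/
def joinSet (A B : Set ℕ) : Set ℕ :=
  {n | (n % 2 = 0 ∧ n / 2 ∈ A) ∨ (n % 2 = 1 ∧ n / 2 ∈ B)}

/-- `A` is recursively enumerable in (the characteristic function of) `X`,
i.e. `A ≤ₑ X ⊕ Xᶜ`. -/
def REin (A X : Set ℕ) : Prop := EnumLE A (joinSet X Xᶜ)

/-- Trees: subsets of `ω^{<ω}` closed under initial segments. -/
def IsTree (T : Set (List ℕ)) : Prop := ∀ ⦃σ τ : List ℕ⦄, σ <+: τ → τ ∈ T → σ ∈ T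

/-- A leaf of `T`: a node with no proper extension in `T`. -/
def IsLeaf (T : Set (List ℕ)) (σ : List ℕ) : Prop :=
  σ ∈ T ∧ ∀ τ ∈ T, σ <+: τ → τ = σ

/-- `T` has no leaves. -/
def NoLeaves (T : Set (List ℕ)) : Prop := ∀ σ ∈ T, ¬ IsLeaf T σ

/-- `T` is finitely branching. -/
def FinBranching (T : Set (List ℕ)) : Prop := ∀ σ ∈ T, {n : ℕ | σ ++ [n] ∈ T}.Finite

/-- `[T]`: the set of infinite paths through `T`. -/
def Paths (T : Set (List ℕ)) : Set (ℕ → ℕ) := {f | ∀ n, (List.range n).map f ∈ T}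

/-- A tree coded as a subset of `ℕ`. -/
def codeTree (T : Set (List ℕ)) : Set ℕ := Encodable.encode '' T

/-- `T` is `h`-bounded. -/
def BoundedTree (h : ℕ → ℕ) (T : Set (List ℕ)) : Prop :=
  ∀ σ ∈ T, ∀ i : ℕ, ∀ hi : i < σ.length, σ.get ⟨i, hi⟩ < h i

/-- A uniformly e-pointed tree with respect to functions. -/
def UEPfun (T : Set (List ℕ)) : Prop :=
  IsTree T ∧ FinBranching T ∧ NoLeaves T ∧
    ∃ e : ℕ, ∀ g ∈ Paths T, enumOpApply e (graphSet g) = codeTree T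

/-- A uniformly e-pointed tree with respect to sets (a subtree of `2^{<ω}`). -/
def UEPset (T : Set (List ℕ)) : Prop :=
  IsTree T ∧ (∀ σ ∈ T, ∀ i ∈ σ, i ≤ 1) ∧ NoLeaves T ∧
    ∃ e : ℕ, ∀ g ∈ Paths T, enumOpApply e {n | g n = 1} = codeTree T

/-- Prepend `i` to a function. -/
def consFun (i : ℕ) (f : ℕ → ℕ) : ℕ → ℕ := fun n => Nat.casesOn n i fun m => f m

/-- The mass problem `0⌢A ∪ 1⌢B`, representing the meet of the degrees of `A` and `B`. -/
def meetProb (A B : Set (ℕ → ℕ)) : Set (ℕ → ℕ) := consFun 0 '' A ∪ consFun 1 '' B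

/-- A mass problem has meet-irreducible Medvedev degree: its degree is not the
meet of two strictly larger degrees. -/
def MeetIrred (X : Set (ℕ → ℕ)) : Prop :=
  ¬ ∃ B C : Set (ℕ → ℕ), MedvedevEquiv (meetProb B C) X ∧
      (MedvedevLE X B ∧ ¬ MedvedevLE B X) ∧ (MedvedevLE X C ∧ ¬ MedvedevLE C X)

/-- `σ` is an initial segment of `f`. -/
def strPrefix (σ : List ℕ) (f : ℕ → ℕ) : Prop := (List.range σ.length).map f = σ

/-- A uniform mass problem. -/
def UniformProb (A : Set (ℕ → ℕ)) : Prop :=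
  ∀ σ : List ℕ, (∃ f ∈ A, strPrefix σ f) → MedvedevLE {f | f ∈ A ∧ strPrefix σ f} A

/-- The `{0,1}`-valued diagonally nonrecursive functions. -/
def DNR2 : Set (ℕ → ℕ) :=
  {f | (∀ n, f n ≤ 1) ∧
    ∀ e y : ℕ, y ∈ (Denumerable.ofNat Nat.Partrec.Code e).eval e → f e ≠ y}

/-- `C_A`: injective enumerations of subsets of `A`. -/
def CProb (A : Set ℕ) : Set (ℕ → ℕ) :=
  {f | Function.Injective f ∧ Set.range f ⊆ A}


/-! ### Auxiliary development -/

open Nat.Partrec (Code)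
open Nat.Partrec.Code Encodable

lemma myRangeMapPrefix (g : ℕ → ℕ) {a b : ℕ} (h : a ≤ b) :
    (List.range a).map g <+: (List.range b).map g := by
  have : (List.range b).take a = List.range a := by
    rw [List.take_range, min_eq_left h]
  exact this ▸ (List.take_prefix a (List.range b)).map g

lemma TuringFunctional.consistent (Φ : TuringFunctional) {τ τ' : List ℕ} {n y y' : ℕ}
    (hc : τ <+: τ' ∨ τ' <+: τ) (h : y ∈ Φ.app (τ, n)) (h' : y' ∈ Φ.app (τ', n)) : y = y' := by
  rcases hc with hp | hp
  · exact Part.mem_unique (Φ.mono hp h) h'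
  · exact Part.mem_unique h (Φ.mono hp h')

lemma TuringFunctional.total_val (Φ : TuringFunctional) {g f : ℕ → ℕ} {n k y : ℕ}
    (hT : Φ.Total g f) (hy : y ∈ Φ.app ((List.range k).map g, n)) : f n = y := by
  obtain ⟨k', hk'⟩ := hT n
  rcases le_total k' k with hle | hle
  · exact Φ.consistent (Or.inl (myRangeMapPrefix g hle)) hk' hy
  · exact Φ.consistent (Or.inr (myRangeMapPrefix g hle)) hk' hy

/-- `τ` is a list of values of `Ψ` with oracle string `σ`. -/
def GList (Ψ : TuringFunctional) (σ τ : List ℕ) : Prop :=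
  ∀ i (h : i < τ.length), τ[i] ∈ Ψ.app (σ, i)

lemma GList.comparable {Ψ : TuringFunctional} {σ τ τ' : List ℕ}
    (h : GList Ψ σ τ) (h' : GList Ψ σ τ') : τ <+: τ' ∨ τ' <+: τ := by
  have key : ∀ {τ τ' : List ℕ}, GList Ψ σ τ → GList Ψ σ τ' → τ.length ≤ τ'.length →
      τ <+: τ' := by
    intro τ τ' h h' hlen
    have : τ = τ'.take τ.length := by
      apply List.ext_getElem
      · simp [hlen]
      · intro i h1 h2
        rw [List.getElem_take]
        exact Part.mem_unique (h i h1) (h' i (lt_of_lt_of_le h1 hlen))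
    exact this ▸ List.take_prefix _ _
  rcases le_total τ.length τ'.length with hle | hle
  · exact Or.inl (key h h' hle)
  · exact Or.inr (key h' h hle)

lemma GList.mono {Ψ : TuringFunctional} {σ σ' τ : List ℕ} (hp : σ <+: σ')
    (h : GList Ψ σ τ) : GList Ψ σ' τ := fun i hi => Ψ.mono hp (h i hi)

/-- Extract a code computing a Turing functional on encoded inputs. -/
lemma TuringFunctional.exists_code (Φ : TuringFunctional) :
    ∃ c : Code, ∀ (a : List ℕ × ℕ) (y : ℕ), y ∈ c.eval (encode a) ↔ y ∈ Φ.app a := by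
  obtain ⟨c, hc⟩ := Nat.Partrec.Code.exists_code.1 Φ.partrec
  refine ⟨c, fun a y => ?_⟩
  have hd : (decode (encode a) : Option (List ℕ × ℕ)) = some a := Encodable.encodek a
  rw [hc]
  simp only [hd]
  simp [Part.mem_map_iff]

def allSome (l : List (Option ℕ)) : Bool := l.foldr (fun o b => cond o.isSome b false) true

lemma allSome_iff : ∀ {l : List (Option ℕ)}, allSome l = true ↔ ∀ o ∈ l, o.isSome = true := by
  intro l
  induction l with
  | nil => simp [allSome]
  | cons o l ih =>
    have hrec : allSome (o :: l) = cond o.isSome (allSome l) false := rfl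
    rw [hrec]
    cases ho : o.isSome
    · simp [ho]
    · simp [ho, ih]

def firstSome (l : List (Option ℕ)) : Option ℕ := l.foldr (fun o acc => cond o.isSome o acc) none

lemma firstSome_eq_some {l : List (Option ℕ)} {y : ℕ} (h : firstSome l = some y) :
    some y ∈ l := by
  induction l with
  | nil => simp [firstSome] at h
  | cons o l ih =>
    cases ho : o.isSome <;> simp [firstSome, ho] at h
    · exact List.mem_cons_of_mem _ (ih h)
    · exact h ▸ List.mem_cons_self

lemma firstSome_isSome {l : List (Option ℕ)} {y : ℕ} (h : some y ∈ l) :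
    (firstSome l).isSome = true := by
  induction l with
  | nil => simp at h
  | cons o l ih =>
    rcases List.mem_cons.1 h with rfl | h'
    · simp [firstSome]
    · cases ho : o.isSome
      · simpa [firstSome, ho] using ih h'
      · simp [firstSome, ho]

/-- One stage of the search used to compose two Turing functionals. -/
def compAttempt (cF cG : Code) (p : List ℕ × ℕ) (s : ℕ) : Option ℕ :=
  firstSome ((List.range (s + 1)).map fun k =>
    cond (allSome ((List.range k).map fun i => evaln s cG (encode (p.1, i))))
      (evaln s cF (encode (((List.range k).map fun i =>
        evaln s cG (encode (p.1, i))).map fun o => o.getD 0, p.2)))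
      none)

/-- The composition of two Turing functionals, given by codes. -/
def compApp (cF cG : Code) (p : List ℕ × ℕ) : Part ℕ :=
  Nat.rfindOpt (compAttempt cF cG p)

lemma allSome_primrec : Primrec allSome :=
  (Primrec.list_foldr .id (Primrec.const true)
    (Primrec.cond (Primrec.option_isSome.comp (Primrec.fst.comp Primrec.snd))
      (Primrec.snd.comp Primrec.snd) (Primrec.const false)).to₂).of_eq fun l => rfl

lemma firstSome_primrec : Primrec firstSome :=
  (Primrec.list_foldr .id (Primrec.const none)
    (Primrec.cond (Primrec.option_isSome.comp (Primrec.fst.comp Primrec.snd))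
      (Primrec.fst.comp Primrec.snd) (Primrec.snd.comp Primrec.snd)).to₂).of_eq fun l => rfl

lemma compAttempt_computable (cF cG : Code) : Computable₂ (compAttempt cF cG) := by
  have hos : Primrec fun b : ((List ℕ × ℕ) × ℕ) × ℕ =>
      (List.range b.2).map fun i => evaln b.1.2 cG (encode (b.1.1.1, i)) :=
    Primrec.list_map (Primrec.list_range.comp Primrec.snd)
      (Nat.Partrec.Code.primrec_evaln.comp <|
        (((Primrec.snd.comp (Primrec.fst.comp Primrec.fst)).pair (Primrec.const cG)).pair
          (Primrec.encode.comp
            ((Primrec.fst.comp (Primrec.fst.comp (Primrec.fst.comp Primrec.fst))).pair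
              Primrec.snd)))).to₂
  have hbody : Primrec fun b : ((List ℕ × ℕ) × ℕ) × ℕ =>
      cond (allSome ((List.range b.2).map fun i => evaln b.1.2 cG (encode (b.1.1.1, i))))
        (evaln b.1.2 cF (encode ((((List.range b.2).map fun i =>
          evaln b.1.2 cG (encode (b.1.1.1, i))).map fun o => o.getD 0), b.1.1.2)))
        none :=
    Primrec.cond (allSome_primrec.comp hos)
      (Nat.Partrec.Code.primrec_evaln.comp <|
        ((Primrec.snd.comp Primrec.fst).pair (Primrec.const cF)).pair
          (Primrec.encode.comp
            ((Primrec.list_map hos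
                (Primrec.to₂ (Primrec.option_getD.comp Primrec.snd (Primrec.const 0)))).pair
              (Primrec.snd.comp (Primrec.fst.comp Primrec.fst)))))
      (Primrec.const none)
  have : Primrec fun a : (List ℕ × ℕ) × ℕ => compAttempt cF cG a.1 a.2 :=
    firstSome_primrec.comp
      (Primrec.list_map (Primrec.list_range.comp (Primrec.succ.comp Primrec.snd)) hbody.to₂)
  exact Primrec₂.to_comp this

lemma compApp_partrec (cF cG : Code) : Partrec (compApp cF cG) :=
  Partrec.rfindOpt (compAttempt_computable cF cG)

section Comp

variable {Φ Ψ : TuringFunctional} {cF cG : Code}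
variable (hF : ∀ (a : List ℕ × ℕ) (y : ℕ), y ∈ cF.eval (encode a) ↔ y ∈ Φ.app a)
variable (hG : ∀ (a : List ℕ × ℕ) (y : ℕ), y ∈ cG.eval (encode a) ↔ y ∈ Ψ.app a)

include hF hG

lemma compAttempt_sound {σ : List ℕ} {n s y : ℕ}
    (h : compAttempt cF cG (σ, n) s = some y) :
    ∃ τ, GList Ψ σ τ ∧ y ∈ Φ.app (τ, n) := by
  obtain hmem := firstSome_eq_some h
  obtain ⟨k, _, hk⟩ := List.mem_map.1 hmem
  dsimp only at hk
  set os := (List.range k).map fun i => evaln s cG (encode (σ, i)) with hos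
  cases hall : allSome os
  · rw [hall] at hk; simp at hk
  · rw [hall, cond_true] at hk
    refine ⟨os.map fun o => o.getD 0, ?_, ?_⟩
    · intro i hi
      simp only [os, List.length_map, List.length_range] at hi
      have hsome : (os[i]'(by simp [os, hi])).isSome = true := by
        apply allSome_iff.1 hall
        exact List.getElem_mem _
      obtain ⟨v, hv⟩ := Option.isSome_iff_exists.1 hsome
      have hvi : v ∈ evaln s cG (encode (σ, i)) := by
        have : os[i]'(by simp [os, hi]) = evaln s cG (encode (σ, i)) := by
          simp [os]
        rw [← this]; exact hv ▸ rfl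
      have hmem' : v ∈ Ψ.app (σ, i) := (hG _ _).1 (evaln_sound hvi)
      have : (os.map fun o => o.getD 0)[i]'(by simp [os, hi]) = v := by
        simp [os, hv]
        have : os[i]'(by simp [os, hi]) = some v := hv
        simp only [os] at this
        simp at this
        simp [this]
      rw [this]
      exact hmem'
    · exact (hF _ _).1 (evaln_sound hk)

lemma compAttempt_complete {σ τ : List ℕ} {n y : ℕ}
    (hτ : GList Ψ σ τ) (hy : y ∈ Φ.app (τ, n)) :
    ∃ s, (compAttempt cF cG (σ, n) s).isSome = true := by
  classical
  set k := τ.length with hk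
  have hstage : ∀ i (h : i < k), ∃ s, τ[i] ∈ evaln s cG (encode (σ, i)) := fun i h =>
    evaln_complete.1 ((hG _ _).2 (hτ i h))
  obtain ⟨s₁, hs₁⟩ := evaln_complete.1 ((hF _ _).2 hy)
  set s₀ := Finset.sup (Finset.range k) fun i =>
    if h : i < k then Classical.choose (hstage i h) else 0 with hs₀def
  set s := max (max s₀ s₁) k with hsdef
  have hvals : ∀ i (h : i < k), τ[i] ∈ evaln s cG (encode (σ, i)) := by
    intro i h
    have := Classical.choose_spec (hstage i h)
    refine evaln_mono ?_ this
    have h1 : (if h' : i < k then Classical.choose (hstage i h') else 0) ≤ s₀ := by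
      rw [hs₀def]
      exact Finset.le_sup (f := fun i =>
        if h' : i < k then Classical.choose (hstage i h') else 0) (Finset.mem_range.2 h)
    rw [dif_pos h] at h1
    exact le_trans h1 (le_trans (le_max_left _ _) (le_max_left _ _))
  set os := (List.range k).map fun i => evaln s cG (encode (σ, i)) with hos
  have hall : allSome os = true := by
    apply allSome_iff.2
    intro o ho
    obtain ⟨i, hi, rfl⟩ := List.mem_map.1 ho
    have hi' : i < k := List.mem_range.1 hi
    exact Option.isSome_iff_exists.2 ⟨_, hvals i hi'⟩
  have hτeq : os.map (fun o => o.getD 0) = τ := by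
    apply List.ext_getElem
    · simp [os, hk]
    · intro i h1 h2
      simp only [os, List.getElem_map, List.getElem_range]
      have hi' : i < k := by simpa [os] using h1
      have := hvals i hi'
      simp only [Option.mem_def] at this
      rw [this]
      rfl
  refine ⟨s, ?_⟩
  apply firstSome_isSome (y := y)
  apply List.mem_map.2
  refine ⟨k, List.mem_range.2 ?_, ?_⟩
  · omega
  · dsimp only
    rw [← hos, hall]
    simp only [cond_true]
    rw [hτeq]
    exact evaln_mono (by omega) hs₁

lemma mem_compApp {σ : List ℕ} {n y : ℕ} :
    y ∈ compApp cF cG (σ, n) ↔ ∃ τ, GList Ψ σ τ ∧ y ∈ Φ.app (τ, n) := by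
  constructor
  · intro hmem
    obtain ⟨s, hs⟩ := Nat.rfindOpt_spec hmem
    exact compAttempt_sound hF hG hs
  · rintro ⟨τ, hτ, hy⟩
    obtain ⟨s, hs⟩ := compAttempt_complete hF hG hτ hy
    obtain ⟨a, ha⟩ := Option.isSome_iff_exists.1 hs
    have hdom : (compApp cF cG (σ, n)).Dom := Nat.rfindOpt_dom.2 ⟨s, a, ha⟩
    have hget : (compApp cF cG (σ, n)).get hdom ∈ compApp cF cG (σ, n) := Part.get_mem hdom
    have hsound : ∃ τ', GList Ψ σ τ' ∧ (compApp cF cG (σ, n)).get hdom ∈ Φ.app (τ', n) := by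
      obtain ⟨s', hs'⟩ := Nat.rfindOpt_spec hget
      exact compAttempt_sound hF hG hs'
    obtain ⟨τ', hτ', hy'⟩ := hsound
    have : y = (compApp cF cG (σ, n)).get hdom :=
      Φ.consistent (GList.comparable hτ hτ') hy hy'
    rw [this]
    exact hget

end Comp

/-- Transitivity of Medvedev reducibility. -/
lemma MedvedevLE.trans' {X Y Z : Set (ℕ → ℕ)} (h₁ : MedvedevLE X Y) (h₂ : MedvedevLE Y Z) :
    MedvedevLE X Z := by
  obtain ⟨Φ, hΦ⟩ := h₁
  obtain ⟨Ψ, hΨ⟩ := h₂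
  obtain ⟨cF, hF⟩ := Φ.exists_code
  obtain ⟨cG, hG⟩ := Ψ.exists_code
  refine ⟨⟨compApp cF cG, compApp_partrec cF cG, ?_⟩, ?_⟩
  · intro σ τ n y hp hy
    obtain ⟨τ₀, hτ₀, hy₀⟩ := (mem_compApp hF hG).1 hy
    exact (mem_compApp hF hG).2 ⟨τ₀, hτ₀.mono hp, hy₀⟩
  · intro g hg
    obtain ⟨f₁, hf₁T, hf₁⟩ := hΨ g hg
    obtain ⟨f₂, hf₂T, hf₂⟩ := hΦ f₁ hf₁
    refine ⟨f₂, ?_, hf₂⟩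
    intro n
    obtain ⟨k, hk⟩ := hf₂T n
    classical
    refine ⟨Finset.sup (Finset.range k) fun i => Classical.choose (hf₁T i), ?_⟩
    apply (mem_compApp hF hG).2
    refine ⟨(List.range k).map f₁, ?_, ?_⟩
    · intro i hi
      simp only [List.length_map, List.length_range] at hi
      have hspec := Classical.choose_spec (hf₁T i)
      have hle : Classical.choose (hf₁T i) ≤
          Finset.sup (Finset.range k) fun i => Classical.choose (hf₁T i) :=
        Finset.le_sup (f := fun i => Classical.choose (hf₁T i)) (Finset.mem_range.2 hi)
      have : ((List.range k).map f₁)[i]'(by simp [hi]) = f₁ i := by simp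
      rw [this]
      exact Ψ.mono (myRangeMapPrefix g hle) hspec
    · exact hk

/-- Reduction of `D` to `i⌢D` by shifting. -/
lemma medvedevLE_cons (i : ℕ) (D : Set (ℕ → ℕ)) : MedvedevLE D (consFun i '' D) := by
  refine ⟨⟨fun p => (p.1[p.2 + 1]? : Option ℕ), ?_, ?_⟩, ?_⟩
  · exact Computable.ofOption
      ((Primrec.list_getElem?.comp Primrec.fst (Primrec.succ.comp Primrec.snd)).to_comp)
  · intro σ τ n y hp hy
    simp only [Part.mem_ofOption, Option.mem_def] at hy ⊢
    obtain ⟨t, rfl⟩ := hp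
    rw [List.getElem?_append_left (by
      rcases List.getElem?_eq_some_iff.1 hy with ⟨h', _⟩
      exact h')]
    exact hy
  · rintro g ⟨d, hd, rfl⟩
    refine ⟨d, ?_, hd⟩
    intro n
    refine ⟨n + 2, ?_⟩
    simp only [Part.mem_ofOption, Option.mem_def]
    have h1 : n + 1 < (List.range (n + 2)).length := by simp
    rw [List.getElem?_eq_getElem (by simp)]
    simp [consFun]

/-- Every uniform mass problem has meet-irreducible Medvedev degree: if
`deg(A) ≥ deg(B) ∧ deg(C)` then `deg(A) ≥ deg(B)` or `deg(A) ≥ deg(C)`. -/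
theorem stmt2 (A B C : Set (ℕ → ℕ)) (hA : UniformProb A)
    (h : MedvedevLE (meetProb B C) A) :
    MedvedevLE B A ∨ MedvedevLE C A := by
  classical
  obtain ⟨Φ, hΦ⟩ := h
  by_cases hcase : ∃ g ∈ A, ∃ k, 0 ∈ Φ.app ((List.range k).map g, 0)
  · -- some oracle in `A` makes `Φ` output a `0⌢B` element
    left
    obtain ⟨g₀, hg₀, k₀, h0⟩ := hcase
    set σ := (List.range k₀).map g₀ with hσ
    have hpre : strPrefix σ g₀ := by
      simp only [strPrefix, σ, List.length_map, List.length_range]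
    have hΨ : MedvedevLE {f | f ∈ A ∧ strPrefix σ f} A := hA σ ⟨g₀, hg₀, hpre⟩
    have hmid : MedvedevLE (consFun 0 '' B) {f | f ∈ A ∧ strPrefix σ f} := by
      refine ⟨Φ, ?_⟩
      rintro g ⟨hgA, hgpre⟩
      obtain ⟨f₂, hf₂T, hf₂⟩ := hΦ g hgA
      have hσg : σ = (List.range σ.length).map g := hgpre.symm
      have h0' : 0 ∈ Φ.app ((List.range σ.length).map g, 0) := hσg ▸ h0
      have hf₂0 : f₂ 0 = 0 := Φ.total_val hf₂T h0'
      rcases hf₂ with ⟨b, hb, rfl⟩ | ⟨c, hc, rfl⟩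
      · exact ⟨consFun 0 b, hf₂T, ⟨b, hb, rfl⟩⟩
      · exact absurd hf₂0 (by simp [consFun])
    exact ((medvedevLE_cons 0 B).trans' hmid).trans' hΨ
  · -- otherwise `Φ` always outputs a `1⌢C` element
    right
    push_neg at hcase
    have hmid : MedvedevLE (consFun 1 '' C) A := by
      refine ⟨Φ, ?_⟩
      intro g hg
      obtain ⟨f₂, hf₂T, hf₂⟩ := hΦ g hg
      rcases hf₂ with ⟨b, hb, rfl⟩ | ⟨c, hc, rfl⟩
      · exfalso
        obtain ⟨k, hk⟩ := hf₂T 0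
        have : consFun 0 b 0 = 0 := rfl
        rw [this] at hk
        exact hcase g hg k hk
      · exact ⟨consFun 1 c, hf₂T, ⟨c, hc, rfl⟩⟩
    exact (medvedevLE_cons 1 C).trans' hmid
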